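/- arXiv:1204.4705 — 2 statements merged into one kernel-verified Lean document; each statement's English description precedes it below -/
import Mathlib

section
/- For positive reals p ≠ q and 1 ≤ k ≤ n, the (p,q)-binomial coefficients satisfy [n+1 choose k]_{p,q} = p^k [n choose k]_{p,q} + p^{n+1-k} [n choose k-1]_{p,q} - (p^n - q^n) [n-1 choose k-1]_{p,q}. -/
noncomputable def pqFact (p q : ℝ) (n : ℕ) : ℝ :=
  ∏ j ∈ Finset.range n, (p ^ (j + 1) - q ^ (j + 1)) / (p - q)

noncomputable def pqBinom (p q : ℝ) (n k : ℕ) : ℝ :=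
  pqFact p q n / (pqFact p q k * pqFact p q (n - k))

lemma pq_pow_ne (p q : ℝ) (hp : 0 < p) (hq : 0 < q) (hne : p ≠ q) (j : ℕ) :
    p ^ (j + 1) - q ^ (j + 1) ≠ 0 := by
  rcases lt_trichotomy p q with h | h | h
  · have := pow_lt_pow_left₀ h hp.le (Nat.succ_ne_zero j)
    simp only [Nat.succ_eq_add_one] at this
    linarith
  · exact absurd h hne
  · have := pow_lt_pow_left₀ h hq.le (Nat.succ_ne_zero j)
    simp only [Nat.succ_eq_add_one] at this
    linarith

lemma pqFact_ne_zero (p q : ℝ) (hp : 0 < p) (hq : 0 < q) (hne : p ≠ q) (n : ℕ) :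
    pqFact p q n ≠ 0 := by
  unfold pqFact
  apply Finset.prod_ne_zero_iff.mpr
  intro j _
  exact div_ne_zero (pq_pow_ne p q hp hq hne j) (sub_ne_zero.mpr hne)

lemma pqFact_succ (p q : ℝ) (n : ℕ) :
    pqFact p q (n + 1) = pqFact p q n * ((p ^ (n + 1) - q ^ (n + 1)) / (p - q)) := by
  unfold pqFact
  rw [Finset.prod_range_succ]

theorem pqBinom_pascal3 (p q : ℝ) (hp : 0 < p) (hq : 0 < q) (hne : p ≠ q)
    (n k : ℕ) (hk1 : 1 ≤ k) (hkn : k ≤ n) :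
    pqBinom p q (n + 1) k =
      p ^ k * pqBinom p q n k + p ^ (n + 1 - k) * pqBinom p q n (k - 1)
        - (p ^ n - q ^ n) * pqBinom p q (n - 1) (k - 1) := by
  obtain ⟨k', rfl⟩ : ∃ k', k = k' + 1 := ⟨k - 1, by omega⟩
  obtain ⟨m, rfl⟩ : ∃ m, n = k' + 1 + m := ⟨n - (k' + 1), by omega⟩
  have e1 : k' + 1 + m + 1 - (k' + 1) = m + 1 := by omega
  have e2 : k' + 1 + m - (k' + 1) = m := by omega
  have e3 : k' + 1 - 1 = k' := by omega
  have e4 : k' + 1 + m - k' = m + 1 := by omega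
  have e5 : k' + 1 + m - 1 = k' + m := by omega
  have e6 : k' + m - k' = m := by omega
  unfold pqBinom
  rw [e1, e2, e3, e4, e5, e6]
  have hsub : p - q ≠ 0 := sub_ne_zero.mpr hne
  have hx := pqFact_ne_zero p q hp hq hne k'
  have hy := pqFact_ne_zero p q hp hq hne m
  have hz := pqFact_ne_zero p q hp hq hne (k' + m)
  have f1 : pqFact p q (k' + 1) = pqFact p q k' * ((p ^ (k' + 1) - q ^ (k' + 1)) / (p - q)) :=
    pqFact_succ p q k'
  have f2 : pqFact p q (m + 1) = pqFact p q m * ((p ^ (m + 1) - q ^ (m + 1)) / (p - q)) :=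
    pqFact_succ p q m
  have f3 : pqFact p q (k' + 1 + m) =
      pqFact p q (k' + m) * ((p ^ (k' + m + 1) - q ^ (k' + m + 1)) / (p - q)) := by
    have : k' + 1 + m = (k' + m) + 1 := by omega
    rw [this, pqFact_succ]
  have f4 : pqFact p q (k' + 1 + m + 1) =
      pqFact p q (k' + m) * ((p ^ (k' + m + 1) - q ^ (k' + m + 1)) / (p - q))
        * ((p ^ (k' + m + 2) - q ^ (k' + m + 2)) / (p - q)) := by
    have h : k' + 1 + m + 1 = (k' + m + 1) + 1 := by omega
    rw [h, pqFact_succ, pqFact_succ]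
  rw [f1, f2, f3, f4]
  have hA := pq_pow_ne p q hp hq hne k'
  have hB := pq_pow_ne p q hp hq hne m
  have hN := pq_pow_ne p q hp hq hne (k' + m)
  field_simp
  ring
end

section
/- Let p ≠ q be positive reals. The (p,q)-Rogers-Szegő polynomials H_n(z;p,q) = ∑_{k=0}^{n} [n choose k]_{p,q} z^k satisfy, for n ≥ 1, the three-term recurrence H_{n+1}(z;p,q) = H_n(pz;p,q) + z p^n H_n(p^{-1}z;p,q) - z(p^n - q^n) H_{n-1}(z;p,q). -/
noncomputable def rogersSzego (p q : ℝ) (n : ℕ) (z : ℝ) : ℝ :=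
  ∑ k ∈ Finset.range (n + 1), pqBinom p q n k * z ^ k

lemma pqNum_pos {p q : ℝ} (hp : 0 < p) (hq : 0 < q) (hne : p ≠ q) (j : ℕ) :
    0 < (p ^ (j + 1) - q ^ (j + 1)) / (p - q) := by
  have hd : p - q ≠ 0 := sub_ne_zero.mpr hne
  have hgeom := geom_sum₂_mul p q (j + 1)
  have : (p ^ (j + 1) - q ^ (j + 1)) / (p - q)
      = ∑ i ∈ Finset.range (j + 1), p ^ i * q ^ (j - i) := by
    rw [eq_comm, eq_div_iff hd, ← hgeom]
    norm_num
  rw [this]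
  apply Finset.sum_pos
  · intro i _; positivity
  · exact ⟨0, Finset.mem_range.mpr (Nat.succ_pos j)⟩

lemma pqFact_pos {p q : ℝ} (hp : 0 < p) (hq : 0 < q) (hne : p ≠ q) (n : ℕ) :
    0 < pqFact p q n := by
  unfold pqFact
  exact Finset.prod_pos fun j _ => pqNum_pos hp hq hne j

lemma pqFact_ne {p q : ℝ} (hp : 0 < p) (hq : 0 < q) (hne : p ≠ q) (n : ℕ) :
    pqFact p q n ≠ 0 := (pqFact_pos hp hq hne n).ne'

lemma key (p q : ℝ) (hp : 0 < p) (hq : 0 < q) (hne : p ≠ q) (m k : ℕ) (hk : k ≤ m) :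
    pqBinom p q (m + 2) (k + 1) =
      p ^ (k + 1) * pqBinom p q (m + 1) (k + 1)
        + p ^ (m + 1 - k) * pqBinom p q (m + 1) k
        - (p ^ (m + 1) - q ^ (m + 1)) * pqBinom p q m k := by
  obtain ⟨j, rfl⟩ : ∃ j, m = k + j := ⟨m - k, by omega⟩
  have hd : p - q ≠ 0 := sub_ne_zero.mpr hne
  have e1 : k + j + 2 - (k + 1) = j + 1 := by omega
  have e2 : k + j + 1 - (k + 1) = j := by omega
  have e3 : k + j + 1 - k = j + 1 := by omega
  have e4 : k + j - k = j := by omega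
  unfold pqBinom
  rw [e1, e2, e3, e4]
  have f1 : pqFact p q (k + j + 2)
      = pqFact p q (k + j + 1) * ((p ^ (k + j + 2) - q ^ (k + j + 2)) / (p - q)) := by
    rw [show k + j + 2 = k + j + 1 + 1 by ring]; exact pqFact_succ _ _ _
  have f2 : pqFact p q (k + j + 1)
      = pqFact p q (k + j) * ((p ^ (k + j + 1) - q ^ (k + j + 1)) / (p - q)) :=
    pqFact_succ _ _ _
  have f3 : pqFact p q (k + 1)
      = pqFact p q k * ((p ^ (k + 1) - q ^ (k + 1)) / (p - q)) := pqFact_succ _ _ _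
  have f4 : pqFact p q (j + 1)
      = pqFact p q j * ((p ^ (j + 1) - q ^ (j + 1)) / (p - q)) := pqFact_succ _ _ _
  rw [f1, f2, f3, f4]
  have hk0 := pqFact_ne hp hq hne k
  have hj0 := pqFact_ne hp hq hne j
  have hkj0 := pqFact_ne hp hq hne (k + j)
  have hBk : p ^ (k + 1) - q ^ (k + 1) ≠ 0 := by
    have := pqFact_ne hp hq hne (k + 1)
    rw [f3] at this
    intro h; apply this; rw [h]; simp
  have hBj : p ^ (j + 1) - q ^ (j + 1) ≠ 0 := by
    have := pqFact_ne hp hq hne (j + 1)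
    rw [f4] at this
    intro h; apply this; rw [h]; simp
  field_simp
  ring

lemma pqFact_zero (p q : ℝ) : pqFact p q 0 = 1 := by
  unfold pqFact; simp

lemma pqBinom_zero {p q : ℝ} (hp : 0 < p) (hq : 0 < q) (hne : p ≠ q) (n : ℕ) :
    pqBinom p q n 0 = 1 := by
  unfold pqBinom
  rw [pqFact_zero, Nat.sub_zero, one_mul, div_self (pqFact_ne hp hq hne n)]

lemma pqBinom_self {p q : ℝ} (hp : 0 < p) (hq : 0 < q) (hne : p ≠ q) (n : ℕ) :
    pqBinom p q n n = 1 := by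
  unfold pqBinom
  rw [Nat.sub_self, pqFact_zero, mul_one, div_self (pqFact_ne hp hq hne n)]

theorem rogersSzego_ttr (p q : ℝ) (hp : 0 < p) (hq : 0 < q) (hne : p ≠ q)
    (n : ℕ) (hn : 1 ≤ n) (z : ℝ) :
    rogersSzego p q (n + 1) z =
      rogersSzego p q n (p * z) + z * p ^ n * rogersSzego p q n (p⁻¹ * z)
        - z * (p ^ n - q ^ n) * rogersSzego p q (n - 1) z := by
  obtain ⟨m, rfl⟩ : ∃ m, n = m + 1 := ⟨n - 1, by omega⟩
  simp only [Nat.add_sub_cancel]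
  unfold rogersSzego
  rw [Finset.sum_range_succ' (fun k => pqBinom p q (m + 1 + 1) k * z ^ k) (m + 2)]
  rw [Finset.sum_range_succ (fun k => pqBinom p q (m + 1 + 1) (k + 1) * z ^ (k + 1)) (m + 1)]
  rw [Finset.sum_range_succ' (fun k => pqBinom p q (m + 1) k * (p * z) ^ k) (m + 1)]
  rw [Finset.sum_range_succ (fun k => pqBinom p q (m + 1) k * (p⁻¹ * z) ^ k) (m + 1)]
  rw [pqBinom_zero hp hq hne, pqBinom_zero hp hq hne,
    pqBinom_self hp hq hne, pqBinom_self hp hq hne]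
  have hinv : z * p ^ (m + 1) * (1 * (p⁻¹ * z) ^ (m + 1)) = z ^ (m + 1 + 1) := by
    rw [one_mul, mul_pow, inv_pow]
    field_simp
    ring
  have hmain :
      (∑ k ∈ Finset.range (m + 1), pqBinom p q (m + 1 + 1) (k + 1) * z ^ (k + 1)) =
        (∑ k ∈ Finset.range (m + 1), pqBinom p q (m + 1) (k + 1) * (p * z) ^ (k + 1))
          + z * p ^ (m + 1) *
            (∑ k ∈ Finset.range (m + 1), pqBinom p q (m + 1) k * (p⁻¹ * z) ^ k)
          - z * (p ^ (m + 1) - q ^ (m + 1)) *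
            (∑ k ∈ Finset.range (m + 1), pqBinom p q m k * z ^ k) := by
    rw [Finset.mul_sum, Finset.mul_sum, ← Finset.sum_add_distrib, ← Finset.sum_sub_distrib]
    apply Finset.sum_congr rfl
    intro k hk
    have hkm : k ≤ m := by
      have := Finset.mem_range.mp hk; omega
    rw [show m + 1 + 1 = m + 2 by ring, key p q hp hq hne m k hkm]
    have hpow : p ^ (m + 1 - k) = p ^ (m + 1) * (p⁻¹) ^ k := by
      rw [inv_pow, eq_mul_inv_iff_mul_eq₀ (by positivity), ← pow_add]
      congr 1; omega
    rw [hpow]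
    ring
  rw [hmain, mul_add, hinv]
  ring
end
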